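/- Let η_len, η ∈ ℝ³ with ‖η_len‖ = 1 and ‖η‖ = 1, and let n > 0 with ‖η_len × η‖² ≤ n². Define η_ref = (1/n)·(η_len × (η_len × η)) − √(1 − (1/n²)·((η_len × η)·(η_len × η)))·η_len. Then ‖η_len × η_ref‖ = (1/n)·‖η_len × η‖; that is, the sine of the angle between the refracted ray and the lens normal equals 1/n times the sine of the angle of incidence. -/

import Mathlib

open Real Matrix

/-- The Euclidean norm of a vector in `ℝ³`. -/
noncomputable def enorm3 (v : Fin 3 → ℝ) : ℝ :=
  ‖(WithLp.equiv 2 (Fin 3 → ℝ)).symm v‖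

lemma enorm3_sq (v : Fin 3 → ℝ) : enorm3 v ^ 2 = v ⬝ᵥ v := by
  simp [enorm3, EuclideanSpace.norm_eq, dotProduct, Fin.sum_univ_three,
    Real.mul_self_sqrt (by nlinarith [sq_nonneg (v 0), sq_nonneg (v 1), sq_nonneg (v 2)] : (0:ℝ) ≤ v 0 * v 0 + v 1 * v 1 + v 2 * v 2), sq]

lemma enorm3_smul (c : ℝ) (v : Fin 3 → ℝ) : enorm3 (c • v) = |c| * enorm3 v := by
  simpa [enorm3] using norm_smul c ((WithLp.equiv 2 (Fin 3 → ℝ)).symm v)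

theorem snell_law_sine_ratio (ηlen η : Fin 3 → ℝ) (n : ℝ)
    (hlen : enorm3 ηlen = 1) (hη : enorm3 η = 1) (hn : 0 < n)
    (hcross : enorm3 (ηlen ⨯₃ η) ^ 2 ≤ n ^ 2) :
    enorm3 (ηlen ⨯₃ ((1 / n) • (ηlen ⨯₃ (ηlen ⨯₃ η))
        - Real.sqrt (1 - (1 / n ^ 2) * ((ηlen ⨯₃ η) ⬝ᵥ (ηlen ⨯₃ η))) • ηlen)) =
      (1 / n) * enorm3 (ηlen ⨯₃ η) := by
  have h1 : ηlen ⬝ᵥ ηlen = 1 := by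
    rw [← enorm3_sq, hlen]; norm_num
  have htriple : ηlen ⨯₃ (ηlen ⨯₃ (ηlen ⨯₃ η)) = -(ηlen ⨯₃ η) := by
    simp only [dotProduct, Fin.sum_univ_three] at h1
    ext i
    fin_cases i
    · simp [crossProduct]
      linear_combination (ηlen 2 * η 1 - ηlen 1 * η 2) * h1
    · simp [crossProduct]
      linear_combination (ηlen 0 * η 2 - ηlen 2 * η 0) * h1
    · simp [crossProduct]
      linear_combination (ηlen 1 * η 0 - ηlen 0 * η 1) * h1
  have key : ηlen ⨯₃ ((1 / n) • (ηlen ⨯₃ (ηlen ⨯₃ η))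
      - Real.sqrt (1 - (1 / n ^ 2) * ((ηlen ⨯₃ η) ⬝ᵥ (ηlen ⨯₃ η))) • ηlen)
      = (-(1 / n)) • (ηlen ⨯₃ η) := by
    rw [map_sub, _root_.map_smul, _root_.map_smul, cross_self, htriple, smul_zero, sub_zero, smul_neg,
      neg_smul]
  rw [key, enorm3_smul, abs_neg, abs_of_pos (by positivity)]
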